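/- Deterministic/expected-value form of the STORM-PG convergence theorem (Theorem 5.1): Let f : E → ℝ be differentiable with L_d-Lipschitz gradient and bounded above by f*. Let η > 0 satisfy η·L_d ≤ 1/2, let α ∈ (0,1], and let constants C_γ ≥ 0, B > 0, S_0 > 0, σ ≥ 0 satisfy 4·C_γ²·η² ≤ α·B. Let ξ_t, g_t (t = 0,1,…,T) be sequences in E with ξ_{t+1} = ξ_t + η·g_t, and set e_t := ‖g_t − ∇f(ξ_t)‖². Assume e_0 ≤ σ²/S_0 and, for every t < T, e_{t+1} ≤ (1−α)²·e_t + (2η²(1−α)²C_γ²/B)·‖g_t‖² + 2α²σ²/B. Then for every T ≥ 1, (1/T)·Σ_{t=0}^{T−1} ‖∇f(ξ_t)‖² ≤ 2(f* − f(ξ_0))/(η·T) + 2·α·σ²/B + (2/T)·σ²/(S_0·α). -/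

import Mathlib

open Finset Set
open scoped RealInnerProductSpace

lemma storm_inner_gradient_eq_fderiv
    {E : Type*} [NormedAddCommGroup E] [InnerProductSpace ℝ E] [CompleteSpace E]
    (f : E → ℝ) (p v : E) : ⟪gradient f p, v⟫ = fderiv ℝ f p v := by
  rw [gradient, InnerProductSpace.toDual_symm_apply]

lemma storm_descent
    {E : Type*} [NormedAddCommGroup E] [InnerProductSpace ℝ E] [CompleteSpace E]
    (f : E → ℝ) (L : ℝ) (hL : 0 ≤ L) (hdiff : Differentiable ℝ f)
    (hlip : ∀ x y : E, ‖gradient f x - gradient f y‖ ≤ L * ‖x - y‖) (x v : E) :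
    f x + ⟪gradient f x, v⟫ - L / 2 * ‖v‖ ^ 2 ≤ f (x + v) := by
  have hc : ∀ t : ℝ, HasDerivAt (fun t : ℝ => x + t • v) v t := fun t => by
    simpa using ((hasDerivAt_id t).smul_const v).const_add x
  have hφ : ∀ t : ℝ, HasDerivAt (fun t : ℝ => f (x + t • v))
      ⟪gradient f (x + t • v), v⟫ t := by
    intro t
    have h1 := (hdiff (x + t • v)).hasFDerivAt.comp_hasDerivAt t (hc t)
    rwa [storm_inner_gradient_eq_fderiv]
  set F : ℝ → ℝ := fun t => f x + t * ⟪gradient f x, v⟫ - f (x + t • v) with hF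
  have hF' : ∀ t : ℝ, HasDerivAt F (⟪gradient f x, v⟫ - ⟪gradient f (x + t • v), v⟫) t := by
    intro t
    exact ((hasDerivAt_mul_const _).const_add (f x)).sub (hφ t)
  have key : F 1 ≤ L * ‖v‖ ^ 2 / 2 * 1 ^ 2 := by
    refine image_le_of_deriv_right_le_deriv_boundary (f := F)
      (f' := fun t => ⟪gradient f x, v⟫ - ⟪gradient f (x + t • v), v⟫)
      (a := 0) (b := 1) (B := fun t => L * ‖v‖ ^ 2 / 2 * t ^ 2)
      (B' := fun t => L * ‖v‖ ^ 2 / 2 * (2 * t)) ?_ ?_ ?_ ?_ ?_ ?_ ⟨zero_le_one, le_refl 1⟩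
    · exact fun t _ => (hF' t).continuousAt.continuousWithinAt
    · exact fun t _ => (hF' t).hasDerivWithinAt
    · simp [hF]
    · exact (continuous_const.mul (continuous_pow 2)).continuousOn
    · intro t _
      have h := ((hasDerivAt_pow 2 t).const_mul (L * ‖v‖ ^ 2 / 2)).hasDerivWithinAt (s := Ici t)
      exact h.congr_deriv (by norm_num)
    · intro t ht
      show ⟪gradient f x, v⟫ - ⟪gradient f (x + t • v), v⟫ ≤ L * ‖v‖ ^ 2 / 2 * (2 * t)
      have h2 : ⟪gradient f x - gradient f (x + t • v), v⟫ ≤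
          ‖gradient f x - gradient f (x + t • v)‖ * ‖v‖ := real_inner_le_norm _ _
      have h3 : ‖gradient f x - gradient f (x + t • v)‖ ≤ L * ‖t • v‖ := by
        have := hlip x (x + t • v)
        simpa using this
      have h4 : ‖t • v‖ = t * ‖v‖ := by
        rw [norm_smul, Real.norm_eq_abs, abs_of_nonneg ht.1]
      rw [← inner_sub_left]
      calc ⟪gradient f x - gradient f (x + t • v), v⟫
          ≤ ‖gradient f x - gradient f (x + t • v)‖ * ‖v‖ := h2
        _ ≤ L * ‖t • v‖ * ‖v‖ := by
            apply mul_le_mul_of_nonneg_right h3 (norm_nonneg _)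
        _ = L * ‖v‖ ^ 2 / 2 * (2 * t) := by rw [h4]; ring
  simp only [hF, one_smul, one_mul, one_pow, mul_one] at key
  linarith [key]

lemma storm_key (α η σ B S₀ T fd : ℝ) (hα : α ≠ 0) (hη : η ≠ 0) (hB : B ≠ 0)
    (hS : S₀ ≠ 0) (hT : T ≠ 0) :
    α * η * ((2 * fd / (η * T) + 2 * α * σ ^ 2 / B + (2 / T) * (σ ^ 2 / (S₀ * α))) * T)
      = 2 * α * fd + η * T * (2 * α ^ 2 * σ ^ 2 / B) + 2 * η * (σ ^ 2 / S₀) := by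
  field_simp

set_option maxHeartbeats 1000000 in
theorem storm_pg_convergence
    {E : Type*} [NormedAddCommGroup E] [InnerProductSpace ℝ E] [CompleteSpace E]
    (f : E → ℝ) (fstar : ℝ) (L_d : ℝ) (hL_d : 0 < L_d)
    (hdiff : Differentiable ℝ f)
    (hlip : ∀ x y : E, ‖gradient f x - gradient f y‖ ≤ L_d * ‖x - y‖)
    (hbdd : ∀ x : E, f x ≤ fstar)
    (η : ℝ) (hη : 0 < η) (hηL : η * L_d ≤ 1 / 2)
    (α : ℝ) (hα0 : 0 < α) (hα1 : α ≤ 1)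
    (C_γ : ℝ) (hC : 0 ≤ C_γ) (B : ℝ) (hB : 0 < B) (S₀ : ℝ) (hS₀ : 0 < S₀)
    (σ : ℝ) (hσ : 0 ≤ σ) (hparam : 4 * C_γ ^ 2 * η ^ 2 ≤ α * B)
    (ξ g : ℕ → E) (hupd : ∀ t : ℕ, ξ (t + 1) = ξ t + η • g t)
    (T : ℕ) (hT : 1 ≤ T)
    (hinit : ‖g 0 - gradient f (ξ 0)‖ ^ 2 ≤ σ ^ 2 / S₀)
    (hrec : ∀ t < T, ‖g (t + 1) - gradient f (ξ (t + 1))‖ ^ 2 ≤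
      (1 - α) ^ 2 * ‖g t - gradient f (ξ t)‖ ^ 2
        + (2 * η ^ 2 * (1 - α) ^ 2 * C_γ ^ 2 / B) * ‖g t‖ ^ 2
        + 2 * α ^ 2 * σ ^ 2 / B) :
    (1 / (T : ℝ)) * ∑ t ∈ range T, ‖gradient f (ξ t)‖ ^ 2 ≤
      2 * (fstar - f (ξ 0)) / (η * T) + 2 * α * σ ^ 2 / B
        + (2 / (T : ℝ)) * (σ ^ 2 / (S₀ * α)) := by
  set e : ℕ → ℝ := fun t => ‖g t - gradient f (ξ t)‖ ^ 2 with he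
  set D := ∑ t ∈ range T, ‖gradient f (ξ t)‖ ^ 2 with hD
  set G := ∑ t ∈ range T, ‖g t‖ ^ 2 with hG
  set S := ∑ t ∈ range T, e t with hS
  set c' : ℝ := 2 * η ^ 2 * (1 - α) ^ 2 * C_γ ^ 2 / B with hc'def
  set d : ℝ := 2 * α ^ 2 * σ ^ 2 / B with hddef
  have hTpos : (0:ℝ) < T := by exact_mod_cast hT
  -- per-step descent inequality
  have hstep : ∀ t : ℕ, η / 2 * ‖gradient f (ξ t)‖ ^ 2 ≤
      f (ξ (t + 1)) - f (ξ t) + η / 2 * e t - η / 4 * ‖g t‖ ^ 2 := by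
    intro t
    have hdesc := storm_descent f L_d hL_d.le hdiff hlip (ξ t) (η • g t)
    rw [← hupd t] at hdesc
    have hin : ⟪gradient f (ξ t), η • g t⟫ = η * ⟪gradient f (ξ t), g t⟫ :=
      real_inner_smul_right _ _ _
    have hns : ‖η • g t‖ = η * ‖g t‖ := by
      rw [norm_smul, Real.norm_eq_abs, abs_of_pos hη]
    have hpol : e t = ‖g t‖ ^ 2 - 2 * ⟪g t, gradient f (ξ t)⟫ + ‖gradient f (ξ t)‖ ^ 2 := by
      rw [he]
      simpa [norm_sub_sq_real] using norm_sub_sq_real (g t) (gradient f (ξ t))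
    have hcomm : ⟪g t, gradient f (ξ t)⟫ = ⟪gradient f (ξ t), g t⟫ := real_inner_comm _ _
    rw [hin, hns] at hdesc
    have hgnn : (0:ℝ) ≤ ‖g t‖ ^ 2 := sq_nonneg _
    nlinarith [mul_nonneg hη.le hgnn, sq_nonneg (η * ‖g t‖)]
  -- summed descent inequality
  have hsum1 : η / 2 * D ≤ (f (ξ T) - f (ξ 0)) + η / 2 * S - η / 4 * G := by
    have h1 : ∑ t ∈ range T, (η / 2 * ‖gradient f (ξ t)‖ ^ 2) ≤
        ∑ t ∈ range T, (f (ξ (t + 1)) - f (ξ t) + η / 2 * e t - η / 4 * ‖g t‖ ^ 2) :=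
      Finset.sum_le_sum fun t _ => hstep t
    have h2 : ∑ t ∈ range T, (f (ξ (t + 1)) - f (ξ t)) = f (ξ T) - f (ξ 0) :=
      Finset.sum_range_sub (fun t => f (ξ t)) T
    simp only [Finset.sum_sub_distrib, Finset.sum_add_distrib, ← Finset.mul_sum] at h1
    rw [Finset.sum_sub_distrib] at h2
    rw [hD, hS, hG]
    linarith
  -- summed recursion
  have hsum3 : α * S ≤ e 0 + c' * G + T * d := by
    have h1 : ∑ t ∈ range T, e (t + 1) ≤
        ∑ t ∈ range T, ((1 - α) * e t + c' * ‖g t‖ ^ 2 + d) := by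
      apply Finset.sum_le_sum
      intro t ht
      have h := hrec t (Finset.mem_range.mp ht)
      have hen : 0 ≤ e t := sq_nonneg _
      have hsq : (1 - α) ^ 2 * e t ≤ (1 - α) * e t := by
        have h1α : 0 ≤ 1 - α := by linarith
        nlinarith [mul_nonneg (mul_nonneg hα0.le h1α) hen]
      calc e (t + 1) ≤ (1 - α) ^ 2 * e t + c' * ‖g t‖ ^ 2 + d := h
        _ ≤ (1 - α) * e t + c' * ‖g t‖ ^ 2 + d := by linarith
    have h2 : ∑ t ∈ range T, e (t + 1) = S + e T - e 0 := by
      have := Finset.sum_range_succ' e T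
      have h3 := Finset.sum_range_succ e T
      rw [hS]
      linarith [this, h3]
    have heT : 0 ≤ e T := sq_nonneg _
    simp only [Finset.sum_add_distrib, ← Finset.mul_sum, Finset.sum_const,
      Finset.card_range, nsmul_eq_mul] at h1
    rw [h2] at h1
    linarith
  -- bound on c'
  have hc'le : c' ≤ α / 2 := by
    rw [hc'def, div_le_iff₀ hB]
    have h1a : (1 - α) ^ 2 ≤ 1 := by
      linarith [mul_nonneg hα0.le (by linarith : (0:ℝ) ≤ 2 - α)]
    have hnn : (0:ℝ) ≤ 2 * η ^ 2 * C_γ ^ 2 := by positivity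
    linarith [mul_le_mul_of_nonneg_left h1a hnn]
  have hGnn : 0 ≤ G := Finset.sum_nonneg fun t _ => sq_nonneg _
  have he0nn : 0 ≤ e 0 := sq_nonneg _
  have hinit0 : e 0 ≤ σ ^ 2 / S₀ := hinit
  clear_value e D G S c' d
  -- combined bound
  have hD' : α * η * D ≤ 2 * α * (fstar - f (ξ 0)) + η * e 0 + η * T * d := by
    have h1 := mul_le_mul_of_nonneg_left hsum1 (by linarith : (0:ℝ) ≤ 2 * α)
    have h2 := mul_le_mul_of_nonneg_left hsum3 hη.le
    have h3 : η * (c' * G) ≤ η * (α / 2 * G) :=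
      mul_le_mul_of_nonneg_left (mul_le_mul_of_nonneg_right hc'le hGnn) hη.le
    have h4 := mul_le_mul_of_nonneg_left (hbdd (ξ T)) (by linarith : (0:ℝ) ≤ 2 * α)
    linarith only [h1, h2, h3, h4, hη, hα0]
  -- finish
  have hαη : 0 < α * η := mul_pos hα0 hη
  rw [one_div_mul_eq_div, div_le_iff₀ hTpos]
  refine le_of_mul_le_mul_left ?_ hαη
  have hT0 : (T:ℝ) ≠ 0 := ne_of_gt hTpos
  have hα0' : α ≠ 0 := ne_of_gt hα0
  have hη0 : η ≠ 0 := ne_of_gt hη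
  have hB0 : B ≠ 0 := ne_of_gt hB
  have hS₀0 : S₀ ≠ 0 := ne_of_gt hS₀
  have hkey := storm_key α η σ B S₀ (T:ℝ) (fstar - f (ξ 0)) hα0' hη0 hB0 hS₀0 hT0
  rw [hkey]
  rw [hddef] at hD'
  have hinit' : η * e 0 ≤ η * (σ ^ 2 / S₀) := mul_le_mul_of_nonneg_left hinit0 hη.le
  have hσS : 0 ≤ σ ^ 2 / S₀ := div_nonneg (sq_nonneg σ) hS₀.le
  linarith only [hD', hinit', mul_nonneg hη.le hσS]
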